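/- Let a ≥ 1 be a real number, let n ≥ 4a be an integer, and let f: {0,1}^n → ℝ be a nonnegative a-self-bounding function. Then ‖f‖_1 ≤ ‖f‖_∞ ≤ 3^a · ‖f‖_1. -/

import Mathlib

noncomputable section

/-- A function `f : {0,1}^n → ℝ` is `a`-self-bounding. -/
def SelfBounding (n : ℕ) (a : ℝ) (f : (Fin n → Bool) → ℝ) : Prop :=
  ∀ x : Fin n → Bool,
    (∀ i : Fin n,
      f x - min (f (Function.update x i false)) (f (Function.update x i true)) ≤ 1) ∧
    ∑ i : Fin n,
      (f x - min (f (Function.update x i false)) (f (Function.update x i true))) ≤ a * f x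

/-- Expectation with respect to the uniform distribution on `{0,1}^n`. -/
def expect (n : ℕ) (g : (Fin n → Bool) → ℝ) : ℝ :=
  (∑ x : Fin n → Bool, g x) / 2 ^ n

namespace SBAux

variable {n : ℕ}

/-- number of coordinates where `z` agrees with `x`. -/
def ag (x z : Fin n → Bool) : ℕ := (Finset.univ.filter fun i : Fin n => z i = x i).card

lemma ag_le (x z : Fin n → Bool) : ag x z ≤ n := by
  classical
  calc ag x z ≤ (Finset.univ : Finset (Fin n)).card := Finset.card_filter_le _ _
  _ = n := by simp

lemma ag_self (x : Fin n → Bool) : ag x x = n := by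
  classical
  simp [ag]

lemma eq_of_ag_eq {x z : Fin n → Bool} (h : ag x z = n) : z = x := by
  classical
  have hall : (Finset.univ.filter fun i : Fin n => z i = x i) = Finset.univ := by
    apply Finset.eq_univ_of_card
    rw [Fintype.card_fin]; exact h
  funext i
  have : i ∈ Finset.univ.filter fun i : Fin n => z i = x i := by
    rw [hall]; exact Finset.mem_univ i
  exact (Finset.mem_filter.mp this).2

lemma ag_update {x z : Fin n → Bool} {i : Fin n} (h : z i = x i) :
    ag x (Function.update z i (!(x i))) + 1 = ag x z := by
  classical
  have hset : (Finset.univ.filter fun j : Fin n => Function.update z i (!(x i)) j = x j)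
      = (Finset.univ.filter fun j : Fin n => z j = x j).erase i := by
    ext j
    by_cases hj : j = i
    · subst hj
      simp [Function.update_self]
    · simp [Function.update_of_ne hj, hj]
  have hmem : i ∈ Finset.univ.filter fun j : Fin n => z j = x j := by
    simp [h]
  have hpos : 0 < (Finset.univ.filter fun j : Fin n => z j = x j).card :=
    Finset.card_pos.mpr ⟨i, hmem⟩
  unfold ag
  rw [hset, Finset.card_erase_of_mem hmem]
  omega

lemma point_le (n : ℕ) (a : ℝ) (f : (Fin n → Bool) → ℝ)
    (hf0 : ∀ x, 0 ≤ f x)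
    (hsum : ∀ x, ∑ i : Fin n,
      (f x - min (f (Function.update x i false)) (f (Function.update x i true))) ≤ a * f x)
    (xm : Fin n → Bool) :
    f xm ≤ (2 : ℝ) ^ a * expect n f := by
  classical
  set A : (Fin n → Bool) → ℕ := fun z => ag xm z with hA
  set dec : (Fin n → Bool) → Fin n → ℝ := fun z i =>
    f z - min (f (Function.update z i false)) (f (Function.update z i true)) with hdec
  have hdec_ge : ∀ (z : Fin n → Bool) (i : Fin n) (b : Bool),
      f z - f (Function.update z i b) ≤ dec z i := by
    intro z i b
    have hmin : min (f (Function.update z i false)) (f (Function.update z i true))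
        ≤ f (Function.update z i b) := by
      cases b
      · exact min_le_left _ _
      · exact min_le_right _ _
    simp only [hdec]
    linarith
  have hdec_nonneg : ∀ (z : Fin n → Bool) (i : Fin n), 0 ≤ dec z i := by
    intro z i
    have := hdec_ge z i (z i)
    rw [Function.update_eq_self] at this
    linarith
  set φ : ℝ → ℝ := fun p => ∑ z : Fin n → Bool, f z * (p ^ A z * (1 - p) ^ (n - A z)) with hφ
  set D : ℝ → ℝ := fun p => ∑ z : Fin n → Bool, f z *
      ((A z : ℝ) * p ^ (A z - 1) * (1 - p) ^ (n - A z)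
        - ((n - A z : ℕ) : ℝ) * p ^ A z * (1 - p) ^ (n - A z - 1)) with hD
  have hφdef : ∀ p : ℝ, φ p = ∑ z : Fin n → Bool, f z * (p ^ A z * (1 - p) ^ (n - A z)) :=
    fun p => rfl
  have hDdef : ∀ p : ℝ, D p = ∑ z : Fin n → Bool, f z *
      ((A z : ℝ) * p ^ (A z - 1) * (1 - p) ^ (n - A z)
        - ((n - A z : ℕ) : ℝ) * p ^ A z * (1 - p) ^ (n - A z - 1)) := fun p => rfl
  have hderiv : ∀ p : ℝ, HasDerivAt φ (D p) p := by
    intro p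
    rw [hφ, hDdef]
    apply HasDerivAt.fun_sum
    intro z _
    have h1 : HasDerivAt (fun p : ℝ => p ^ A z) ((A z : ℝ) * p ^ (A z - 1)) p :=
      hasDerivAt_pow _ _
    have hin : HasDerivAt (fun p : ℝ => 1 - p) (-1) p := (hasDerivAt_id p).const_sub 1
    have h2 : HasDerivAt (fun p : ℝ => (1 - p) ^ (n - A z))
        ((((n - A z : ℕ) : ℝ) * (1 - p) ^ (n - A z - 1)) * (-1)) p :=
      (hasDerivAt_pow (n - A z) (1 - p)).comp p hin
    have h3 := (h1.fun_mul h2).const_mul (f z)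
    convert h3 using 1
    · rfl
    ring
  have hkey : ∀ p : ℝ, 0 < p → p ≤ 1 → D p ≤ a / p * φ p := by
    intro p hp0 hp1
    have hq0 : (0:ℝ) ≤ 1 - p := by linarith
    have hw : ∀ z : Fin n → Bool, (0:ℝ) ≤ p ^ A z * (1-p) ^ (n - A z) :=
      fun z => mul_nonneg (pow_nonneg hp0.le _) (pow_nonneg hq0 _)
    have hsplit : D p = ∑ i : Fin n, ∑ z : Fin n → Bool,
        (if z i = xm i then f z * (p ^ (A z - 1) * (1-p) ^ (n - A z))
         else -(f z * (p ^ A z * (1-p) ^ (n - A z - 1)))) := by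
      rw [hDdef, Finset.sum_comm]
      apply Finset.sum_congr rfl
      intro z _
      have hcard1 : (Finset.univ.filter fun i : Fin n => z i = xm i).card = A z := rfl
      have hcard2 : (Finset.univ.filter fun i : Fin n => ¬ (z i = xm i)).card = n - A z := by
        have h := Finset.card_filter_add_card_filter_not
          (s := (Finset.univ : Finset (Fin n))) (fun i : Fin n => z i = xm i)
        simp only [Finset.card_univ, Fintype.card_fin] at h
        omega
      rw [Finset.sum_ite, Finset.sum_const, Finset.sum_const, hcard2, hcard1]
      simp only [nsmul_eq_mul]
      ring
    have hstep : ∀ i : Fin n,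
        (∑ z : Fin n → Bool,
          (if z i = xm i then f z * (p ^ (A z - 1) * (1-p) ^ (n - A z))
           else -(f z * (p ^ A z * (1-p) ^ (n - A z - 1)))))
        ≤ ∑ z : Fin n → Bool, dec z i * (p ^ A z * (1-p) ^ (n - A z)) / p := by
      intro i
      rw [Finset.sum_ite]
      have hre : (∑ z ∈ Finset.univ.filter (fun z : Fin n → Bool => ¬ (z i = xm i)),
            -(f z * (p ^ A z * (1-p) ^ (n - A z - 1))))
          = ∑ u ∈ Finset.univ.filter (fun u : Fin n → Bool => u i = xm i),
            -(f (Function.update u i (!(xm i))) * (p ^ (A u - 1) * (1-p) ^ (n - A u))) := by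
        apply Finset.sum_nbij' (i := fun z => Function.update z i (xm i))
          (j := fun u => Function.update u i (!(xm i)))
        · intro z hz
          simp [Function.update_self]
        · intro u hu
          simp [Function.update_self]
        · intro z hz
          simp only [Finset.mem_filter, Finset.mem_univ, true_and] at hz
          have hz' : z i = !(xm i) := by
            cases hxi : xm i <;> cases hzi : z i <;> simp_all
          rw [Function.update_idem, ← hz', Function.update_eq_self]
        · intro u hu
          simp only [Finset.mem_filter, Finset.mem_univ, true_and] at hu
          rw [Function.update_idem, ← hu, Function.update_eq_self]
        · intro z hz
          simp only [Finset.mem_filter, Finset.mem_univ, true_and] at hz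
          set u := Function.update z i (xm i) with hu
          have hui : u i = xm i := by rw [hu]; simp [Function.update_self]
          have hz' : z i = !(xm i) := by
            cases hxi : xm i <;> cases hzi : z i <;> simp [hxi, hzi] at hz ⊢
          have hback : Function.update u i (!(xm i)) = z := by
            rw [hu, Function.update_idem, ← hz', Function.update_eq_self]
          have hag : A (Function.update u i (!(xm i))) + 1 = A u := ag_update hui
          rw [hback] at hag
          have hAu1 : A u - 1 = A z := by omega
          have hAu2 : n - A u = n - A z - 1 := by
            have h5 : A u ≤ n := ag_le xm u
            omega
          rw [hback, hAu1, hAu2]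
      rw [hre]
      have hcomb : (∑ u ∈ Finset.univ.filter (fun u : Fin n → Bool => u i = xm i),
            f u * (p ^ (A u - 1) * (1-p) ^ (n - A u)))
          + (∑ u ∈ Finset.univ.filter (fun u : Fin n → Bool => u i = xm i),
            -(f (Function.update u i (!(xm i))) * (p ^ (A u - 1) * (1-p) ^ (n - A u))))
          = ∑ u ∈ Finset.univ.filter (fun u : Fin n → Bool => u i = xm i),
            (f u - f (Function.update u i (!(xm i)))) * (p ^ (A u - 1) * (1-p) ^ (n - A u)) := by
        rw [← Finset.sum_add_distrib]
        apply Finset.sum_congr rfl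
        intros; ring
      rw [hcomb]
      have hwgt : ∀ u : Fin n → Bool, (0:ℝ) ≤ p ^ (A u - 1) * (1-p) ^ (n - A u) :=
        fun u => mul_nonneg (pow_nonneg hp0.le _) (pow_nonneg hq0 _)
      calc (∑ u ∈ Finset.univ.filter (fun u : Fin n → Bool => u i = xm i),
            (f u - f (Function.update u i (!(xm i)))) * (p ^ (A u - 1) * (1-p) ^ (n - A u)))
          ≤ ∑ u ∈ Finset.univ.filter (fun u : Fin n → Bool => u i = xm i),
            dec u i * (p ^ (A u - 1) * (1-p) ^ (n - A u)) := by
            apply Finset.sum_le_sum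
            intro u _
            exact mul_le_mul_of_nonneg_right (hdec_ge u i _) (hwgt u)
        _ ≤ ∑ u : Fin n → Bool, dec u i * (p ^ (A u - 1) * (1-p) ^ (n - A u)) := by
            apply Finset.sum_le_sum_of_subset_of_nonneg (Finset.filter_subset _ _)
            intro u _ _
            exact mul_nonneg (hdec_nonneg u i) (hwgt u)
        _ ≤ ∑ u : Fin n → Bool, dec u i * (p ^ A u * (1-p) ^ (n - A u)) / p := by
            apply Finset.sum_le_sum
            intro u _
            have hper : p ^ (A u - 1) * (1-p) ^ (n - A u)
                ≤ p ^ A u * (1-p) ^ (n - A u) / p := by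
              rcases Nat.eq_zero_or_pos (A u) with h0 | hpos
              · rw [h0]
                simp only [Nat.zero_sub, pow_zero, one_mul]
                rw [le_div_iff₀ hp0]
                exact mul_le_of_le_one_right (pow_nonneg hq0 _) hp1
              · have hAe : A u - 1 + 1 = A u := by omega
                apply le_of_eq
                rw [← hAe, pow_succ]
                field_simp
                ring_nf
                rw [Nat.add_sub_cancel_left]
            calc dec u i * (p ^ (A u - 1) * (1-p) ^ (n - A u))
                ≤ dec u i * (p ^ A u * (1-p) ^ (n - A u) / p) :=
                  mul_le_mul_of_nonneg_left hper (hdec_nonneg u i)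
              _ = dec u i * (p ^ A u * (1-p) ^ (n - A u)) / p := by ring
    calc D p = ∑ i : Fin n, ∑ z : Fin n → Bool,
        (if z i = xm i then f z * (p ^ (A z - 1) * (1-p) ^ (n - A z))
         else -(f z * (p ^ A z * (1-p) ^ (n - A z - 1)))) := hsplit
      _ ≤ ∑ i : Fin n, ∑ z : Fin n → Bool,
          dec z i * (p ^ A z * (1-p) ^ (n - A z)) / p :=
          Finset.sum_le_sum (fun i _ => hstep i)
      _ = ∑ z : Fin n → Bool, (∑ i : Fin n, dec z i) * (p ^ A z * (1-p) ^ (n - A z)) / p := by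
          rw [Finset.sum_comm]
          apply Finset.sum_congr rfl
          intro z _
          rw [Finset.sum_mul, Finset.sum_div]
      _ ≤ ∑ z : Fin n → Bool, (a * f z) * (p ^ A z * (1-p) ^ (n - A z)) / p := by
          apply Finset.sum_le_sum
          intro z _
          have h1 : (∑ i : Fin n, dec z i) ≤ a * f z := hsum z
          have h2 := mul_le_mul_of_nonneg_right h1 (hw z)
          exact div_le_div_of_nonneg_right h2 hp0.le
      _ = a / p * φ p := by
          rw [hφdef, Finset.mul_sum]
          apply Finset.sum_congr rfl
          intro z _
          ring
  -- monotonicity of p ↦ φ p * p ^ (-a)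
  have hmono : AntitoneOn (fun p : ℝ => φ p * p ^ (-a)) (Set.Icc (1/2 : ℝ) 1) := by
    apply antitoneOn_of_deriv_nonpos (convex_Icc _ _)
    · apply ContinuousOn.mul
      · exact (fun p _ => ((hderiv p).continuousAt).continuousWithinAt)
      · apply ContinuousOn.rpow_const continuousOn_id
        intro x hx
        left
        have h1 : (1/2 : ℝ) ≤ x := hx.1
        simp only [id_eq]
        intro h0
        rw [h0] at h1
        norm_num at h1
    · intro x hx
      rw [interior_Icc] at hx
      have hx0 : (0:ℝ) < x := lt_trans (by norm_num) hx.1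
      exact ((hderiv x).mul
        (Real.hasDerivAt_rpow_const (Or.inl (ne_of_gt hx0)))).differentiableAt.differentiableWithinAt
    · intro x hx
      rw [interior_Icc] at hx
      have hx0 : (0:ℝ) < x := lt_trans (by norm_num) hx.1
      have hd := (hderiv x).fun_mul (Real.hasDerivAt_rpow_const (p := -a) (Or.inl (ne_of_gt hx0)))
      rw [hd.deriv]
      have h1 : D x ≤ a / x * φ x := hkey x hx0 hx.2.le
      have hxp : (0:ℝ) < x ^ (-a) := Real.rpow_pos_of_pos hx0 _
      have h2 : x ^ (-a - 1) = x ^ (-a) / x := by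
        rw [Real.rpow_sub hx0, Real.rpow_one]
      have h3 : D x * x ^ (-a) ≤ (a / x * φ x) * x ^ (-a) :=
        mul_le_mul_of_nonneg_right h1 hxp.le
      have h4 : φ x * (-a * x ^ (-a - 1)) = -((a / x * φ x) * x ^ (-a)) := by
        rw [h2]
        ring
      linarith
  -- evaluate at the endpoints
  have hφ1 : φ 1 = f xm := by
    rw [hφdef]
    rw [Finset.sum_eq_single xm]
    · have : A xm = n := ag_self xm
      rw [this]
      simp
    · intro z _ hz
      have hAlt : A z < n := lt_of_le_of_ne (ag_le _ _) (fun h => hz (eq_of_ag_eq h))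
      have hzero : (1 - (1:ℝ)) ^ (n - A z) = 0 := by
        rw [sub_self]
        exact zero_pow (by omega)
      rw [hzero]
      ring
    · intro h
      exact absurd (Finset.mem_univ _) h
  have hφhalf : φ (1/2 : ℝ) = expect n f := by
    rw [hφdef, expect, Finset.sum_div]
    apply Finset.sum_congr rfl
    intro z _
    have hAB : A z + (n - A z) = n := by
      have h5 : A z ≤ n := ag_le xm z
      omega
    have hhalf : ((1:ℝ)/2) ^ A z * (1 - 1/2) ^ (n - A z) = 1 / 2 ^ n := by
      have : (1 : ℝ) - 1/2 = 1/2 := by norm_num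
      rw [this, ← pow_add, hAB]
      rw [div_pow, one_pow]
    rw [hhalf]
    ring
  have h12 : (1/2 : ℝ) ∈ Set.Icc (1/2 : ℝ) 1 := by norm_num
  have h1m : (1 : ℝ) ∈ Set.Icc (1/2 : ℝ) 1 := by norm_num
  have hcomp := hmono h12 h1m (by norm_num)
  simp only [Real.one_rpow] at hcomp
  have hpow : ((1:ℝ)/2) ^ (-a) = (2:ℝ) ^ a := by
    rw [one_div, Real.inv_rpow (by norm_num : (0:ℝ) ≤ 2), Real.rpow_neg (by norm_num : (0:ℝ) ≤ 2),
      inv_inv]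
  rw [hφ1, hφhalf, hpow, mul_one] at hcomp
  linarith [hcomp]

end SBAux

theorem selfbounding_norm_comparison (n : ℕ) (a : ℝ) (ha : 1 ≤ a) (hn : 4 * a ≤ (n : ℝ))
    (f : (Fin n → Bool) → ℝ) (hf0 : ∀ x, 0 ≤ f x) (hf : SelfBounding n a f) :
    expect n (fun x => |f x|) ≤ (⨆ x : Fin n → Bool, |f x|) ∧
      (⨆ x : Fin n → Bool, |f x|) ≤ (3 : ℝ) ^ (a : ℝ) * expect n (fun x => |f x|) := by
  classical
  have habs : (fun x : Fin n → Bool => |f x|) = f := by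
    funext x
    exact abs_of_nonneg (hf0 x)
  rw [habs]
  obtain ⟨xm, hmax⟩ := Finite.exists_max f
  have hsup : (⨆ x : Fin n → Bool, f x) = f xm := by
    apply le_antisymm
    · exact ciSup_le hmax
    · exact le_ciSup (Set.Finite.bddAbove (Set.finite_range f)) xm
  rw [hsup]
  have hexp_nonneg : 0 ≤ expect n f := by
    apply div_nonneg _ (by positivity)
    exact Finset.sum_nonneg (fun x _ => hf0 x)
  constructor
  · -- expectation ≤ max
    rw [expect, div_le_iff₀ (by positivity)]
    calc (∑ x : Fin n → Bool, f x) ≤ ∑ _x : Fin n → Bool, f xm :=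
          Finset.sum_le_sum (fun x _ => hmax x)
      _ = (Fintype.card (Fin n → Bool) : ℝ) * f xm := by
          rw [Finset.sum_const, Finset.card_univ, nsmul_eq_mul]
      _ = f xm * 2 ^ n := by
          rw [Fintype.card_fun]
          simp [mul_comm]
  · -- max ≤ 3^a * expectation
    have h2 : f xm ≤ (2:ℝ) ^ a * expect n f :=
      SBAux.point_le n a f hf0 (fun x => (hf x).2) xm
    have h23 : (2:ℝ) ^ a ≤ (3:ℝ) ^ a :=
      Real.rpow_le_rpow (by norm_num) (by norm_num) (by linarith)
    calc f xm ≤ (2:ℝ) ^ a * expect n f := h2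
      _ ≤ (3:ℝ) ^ a * expect n f := mul_le_mul_of_nonneg_right h23 hexp_nonneg
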